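/- arXiv:1311.2578 — 5 statements merged into one kernel-verified Lean document; each statement's English description precedes it below -/
import Mathlib

section
/- Let S be a uniformly random ℓ-element subset of [n], where ℓ is an integer with 1 ≤ ℓ ≤ n. Then E[ max_{x ∈ P(ℓ/n, S)} c^T x ] ≥ (ℓ/n)² · OPT. -/
open Finset

/-- The optimal value of the packing LP with capacities scaled by `f`,
restricted to the requests in `S`. -/
noncomputable def lpValue {n K m : ℕ} (c : Fin n → Fin K → ℝ)
    (a : Fin m → Fin n → Fin K → ℝ) (b : Fin m → ℝ) (f : ℝ) (S : Finset (Fin n)) : ℝ :=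
  sSup ((fun x : Fin n → Fin K → ℝ => ∑ j, ∑ k, c j k * x j k) ''
    {x | (∀ j k, 0 ≤ x j k) ∧ (∀ i, ∑ j, ∑ k, a i j k * x j k ≤ f * b i) ∧
         (∀ j, ∑ k, x j k ≤ 1) ∧ ∀ j, j ∉ S → ∀ k, x j k = 0})

lemma lpBdd {n K m : ℕ} (c : Fin n → Fin K → ℝ) (hc : ∀ j k, 0 ≤ c j k)
    (a : Fin m → Fin n → Fin K → ℝ) (b : Fin m → ℝ) (f : ℝ) (S : Finset (Fin n)) :
    BddAbove ((fun x : Fin n → Fin K → ℝ => ∑ j, ∑ k, c j k * x j k) ''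
    {x | (∀ j k, 0 ≤ x j k) ∧ (∀ i, ∑ j, ∑ k, a i j k * x j k ≤ f * b i) ∧
         (∀ j, ∑ k, x j k ≤ 1) ∧ ∀ j, j ∉ S → ∀ k, x j k = 0}) := by
  refine ⟨∑ j, ∑ k, c j k, ?_⟩
  rintro v ⟨x, ⟨hx0, _, hx1, _⟩, rfl⟩
  apply Finset.sum_le_sum; intro j _
  apply Finset.sum_le_sum; intro k _
  have hxk : x j k ≤ 1 :=
    le_trans (Finset.single_le_sum (fun k _ => hx0 j k) (mem_univ k)) (hx1 j)
  calc c j k * x j k ≤ c j k * 1 := mul_le_mul_of_nonneg_left hxk (hc j k)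
    _ = c j k := mul_one _

lemma count_mem {n ℓ : ℕ} (hℓ1 : 1 ≤ ℓ) (j : Fin n) :
    ((Finset.powersetCard ℓ (Finset.univ : Finset (Fin n))).filter (fun S => j ∈ S)).card
      = (n-1).choose (ℓ-1) := by
  have h1 : ((Finset.powersetCard ℓ (Finset.univ : Finset (Fin n))).filter
        (fun S => j ∈ S)).card
      = (Finset.powersetCard (ℓ-1) ((Finset.univ : Finset (Fin n)).erase j)).card := by
    refine Finset.card_bij' (fun S _ => S.erase j) (fun T _ => insert j T)
      ?hi ?hj ?li ?ri
    case hi =>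
      intro S hS
      rw [Finset.mem_filter, Finset.mem_powersetCard] at hS
      rw [Finset.mem_powersetCard]
      exact ⟨Finset.erase_subset_erase j hS.1.1,
        by rw [Finset.card_erase_of_mem hS.2, hS.1.2]⟩
    case hj =>
      intro T hT
      rw [Finset.mem_powersetCard] at hT
      have hjT : j ∉ T := fun h => (Finset.mem_erase.mp (hT.1 h)).1 rfl
      rw [Finset.mem_filter, Finset.mem_powersetCard]
      refine ⟨⟨Finset.subset_univ _, ?_⟩, Finset.mem_insert_self _ _⟩
      rw [Finset.card_insert_of_notMem hjT, hT.2]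
      omega
    case li =>
      intro S hS
      rw [Finset.mem_filter] at hS
      exact Finset.insert_erase hS.2
    case ri =>
      intro T hT
      rw [Finset.mem_powersetCard] at hT
      exact Finset.erase_insert (fun h => (Finset.mem_erase.mp (hT.1 h)).1 rfl)
  rw [h1, Finset.card_powersetCard, Finset.card_erase_of_mem (mem_univ j),
    Finset.card_univ, Fintype.card_fin]

/-- for a uniformly random `ℓ`-subset `S` of `[n]` with `1 ≤ ℓ ≤ n`,
`E[max_{x ∈ P(ℓ/n, S)} cᵀx] ≥ (ℓ/n)² · OPT`. -/
theorem stmt_1 (n K m : ℕ)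
    (c : Fin n → Fin K → ℝ) (hc : ∀ j k, 0 ≤ c j k)
    (a : Fin m → Fin n → Fin K → ℝ) (ha0 : ∀ i j k, 0 ≤ a i j k)
    (b : Fin m → ℝ) (hb : ∀ i, 0 ≤ b i)
    (ℓ : ℕ) (hℓ1 : 1 ≤ ℓ) (hℓn : ℓ ≤ n) :
    (∑ S ∈ Finset.powersetCard ℓ (Finset.univ : Finset (Fin n)),
        lpValue c a b ((ℓ : ℝ) / n) S) / (n.choose ℓ : ℝ)
      ≥ ((ℓ : ℝ) / n) ^ 2 * lpValue c a b 1 Finset.univ := by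
  have hn : 1 ≤ n := le_trans hℓ1 hℓn
  have hn0 : (0:ℝ) < n := by exact_mod_cast hn
  have hℓ0 : (0:ℝ) < ℓ := by exact_mod_cast hℓ1
  set r : ℝ := (ℓ:ℝ)/n with hr
  have hr0 : (0:ℝ) < r := div_pos hℓ0 hn0
  have hr1 : r ≤ 1 := by
    rw [hr, div_le_one hn0]; exact_mod_cast hℓn
  have hch : (0:ℝ) < (n.choose ℓ : ℝ) := by exact_mod_cast Nat.choose_pos hℓn
  set T : ℝ := ∑ S ∈ Finset.powersetCard ℓ (Finset.univ : Finset (Fin n)),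
      lpValue c a b r S with hT
  rw [ge_iff_le, le_div_iff₀ hch]
  -- goal : r^2 * lpValue c a b 1 univ * (choose) ≤ T
  -- binomial identity
  have hid : ((n-1).choose (ℓ-1) : ℝ) = r * (n.choose ℓ : ℝ) := by
    have h := Nat.add_one_mul_choose_eq (n-1) (ℓ-1)
    have e1 : n - 1 + 1 = n := by omega
    have e2 : ℓ - 1 + 1 = ℓ := by omega
    rw [e1, e2] at h
    -- h : n * (n-1).choose (ℓ-1) = n.choose ℓ * ℓ
    have h' : (n-1).choose (ℓ-1) * n = ℓ * n.choose ℓ := by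
      rw [Nat.mul_comm, h, Nat.mul_comm]
    rw [hr]
    field_simp
    exact_mod_cast h'
  -- key: every feasible x for the full LP gives the bound
  have hbound : ∀ v ∈ (fun x : Fin n → Fin K → ℝ => ∑ j, ∑ k, c j k * x j k) ''
      {x | (∀ j k, 0 ≤ x j k) ∧ (∀ i, ∑ j, ∑ k, a i j k * x j k ≤ 1 * b i) ∧
        (∀ j, ∑ k, x j k ≤ 1) ∧ ∀ j, j ∉ (Finset.univ : Finset (Fin n)) → ∀ k, x j k = 0},
      v ≤ T / (r^2 * (n.choose ℓ : ℝ)) := by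
    rintro v ⟨x, ⟨hx0, hxb, hx1, -⟩, rfl⟩
    rw [le_div_iff₀ (by positivity)]
    have key : ∀ S ∈ Finset.powersetCard ℓ (Finset.univ : Finset (Fin n)),
        r * ∑ j ∈ S, ∑ k, c j k * x j k ≤ lpValue c a b r S := by
      intro S hS
      rw [Finset.mem_powersetCard] at hS
      set y : Fin n → Fin K → ℝ := fun j k => if j ∈ S then r * x j k else 0 with hy
      have hval : (∑ j, ∑ k, c j k * y j k) = r * ∑ j ∈ S, ∑ k, c j k * x j k := by
        calc (∑ j, ∑ k, c j k * y j k)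
            = ∑ j, if j ∈ S then r * ∑ k, c j k * x j k else 0 := by
              apply Finset.sum_congr rfl; intro j _
              by_cases h : j ∈ S
              · simp only [hy, h, if_true, Finset.mul_sum]
                apply Finset.sum_congr rfl; intro k _; ring
              · simp [hy, h]
          _ = ∑ j ∈ S, r * ∑ k, c j k * x j k := by
              rw [Finset.sum_ite_mem, Finset.univ_inter]
          _ = r * ∑ j ∈ S, ∑ k, c j k * x j k := by rw [Finset.mul_sum]
      apply le_csSup (lpBdd c hc a b r S)
      refine ⟨y, ⟨?_, ?_, ?_, ?_⟩, hval⟩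
      · intro j k
        by_cases h : j ∈ S
        · simp only [hy, h, if_true]; exact mul_nonneg hr0.le (hx0 j k)
        · simp [hy, h]
      · intro i
        have step : ∀ j k, a i j k * y j k ≤ r * (a i j k * x j k) := by
          intro j k
          by_cases h : j ∈ S
          · simp only [hy, h, if_true]; rw [mul_comm (r) (x j k), ← mul_assoc]
            apply le_of_eq; ring
          · simp only [hy, h, if_false, mul_zero]
            exact mul_nonneg hr0.le (mul_nonneg (ha0 i j k) (hx0 j k))
        calc (∑ j, ∑ k, a i j k * y j k)
            ≤ ∑ j, ∑ k, r * (a i j k * x j k) := by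
              apply Finset.sum_le_sum; intro j _
              exact Finset.sum_le_sum fun k _ => step j k
          _ = r * ∑ j, ∑ k, a i j k * x j k := by rw [Finset.mul_sum]; simp [Finset.mul_sum]
          _ ≤ r * (1 * b i) := mul_le_mul_of_nonneg_left (hxb i) hr0.le
          _ = r * b i := by ring
      · intro j
        by_cases h : j ∈ S
        · calc (∑ k, y j k) = r * ∑ k, x j k := by
                simp only [hy, h, if_true, Finset.mul_sum]
            _ ≤ r * 1 := mul_le_mul_of_nonneg_left (hx1 j) hr0.le
            _ ≤ 1 := by rw [mul_one]; exact hr1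
        · simp [hy, h]
      · intro j hj k
        simp [hy, hj]
    -- sum over S
    have hsum : ∑ S ∈ Finset.powersetCard ℓ (Finset.univ : Finset (Fin n)),
        (r * ∑ j ∈ S, ∑ k, c j k * x j k) ≤ T := Finset.sum_le_sum key
    have hswap : ∑ S ∈ Finset.powersetCard ℓ (Finset.univ : Finset (Fin n)),
        (∑ j ∈ S, ∑ k, c j k * x j k)
        = ((n-1).choose (ℓ-1) : ℝ) * ∑ j, ∑ k, c j k * x j k := by
      calc ∑ S ∈ Finset.powersetCard ℓ (Finset.univ : Finset (Fin n)),
            (∑ j ∈ S, ∑ k, c j k * x j k)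
          = ∑ S ∈ Finset.powersetCard ℓ (Finset.univ : Finset (Fin n)),
            ∑ j, (if j ∈ S then ∑ k, c j k * x j k else 0) := by
            apply Finset.sum_congr rfl; intro S _
            rw [Finset.sum_ite_mem, Finset.univ_inter]
        _ = ∑ j, ∑ S ∈ Finset.powersetCard ℓ (Finset.univ : Finset (Fin n)),
            (if j ∈ S then ∑ k, c j k * x j k else 0) := Finset.sum_comm
        _ = ∑ j, ((n-1).choose (ℓ-1) : ℝ) * ∑ k, c j k * x j k := by
            apply Finset.sum_congr rfl; intro j _
            rw [← Finset.sum_filter, Finset.sum_const, count_mem hℓ1 j, nsmul_eq_mul]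
        _ = ((n-1).choose (ℓ-1) : ℝ) * ∑ j, ∑ k, c j k * x j k := by
            rw [Finset.mul_sum]
    calc (∑ j, ∑ k, c j k * x j k) * (r^2 * (n.choose ℓ : ℝ))
        = r * (((n-1).choose (ℓ-1) : ℝ) * ∑ j, ∑ k, c j k * x j k) := by
          rw [hid]; ring
      _ = ∑ S ∈ Finset.powersetCard ℓ (Finset.univ : Finset (Fin n)),
          (r * ∑ j ∈ S, ∑ k, c j k * x j k) := by
          rw [← hswap, Finset.mul_sum]
      _ ≤ T := hsum
  have hne : ((fun x : Fin n → Fin K → ℝ => ∑ j, ∑ k, c j k * x j k) ''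
      {x | (∀ j k, 0 ≤ x j k) ∧ (∀ i, ∑ j, ∑ k, a i j k * x j k ≤ 1 * b i) ∧
        (∀ j, ∑ k, x j k ≤ 1) ∧ ∀ j, j ∉ (Finset.univ : Finset (Fin n)) → ∀ k, x j k = 0}).Nonempty := by
    refine ⟨0, ⟨(fun _ _ => (0:ℝ)), ⟨fun _ _ => le_refl 0, fun i => ?_, fun _ => ?_,
      fun _ _ _ => rfl⟩, by simp⟩⟩
    · simp [hb i]
    · simp
  have h2 : lpValue c a b 1 Finset.univ ≤ T / (r^2 * (n.choose ℓ : ℝ)) := by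
    rw [lpValue]
    exact csSup_le hne hbound
  calc r^2 * lpValue c a b 1 Finset.univ * (n.choose ℓ : ℝ)
      = lpValue c a b 1 Finset.univ * (r^2 * (n.choose ℓ : ℝ)) := by ring
    _ ≤ (T / (r^2 * (n.choose ℓ : ℝ))) * (r^2 * (n.choose ℓ : ℝ)) :=
        mul_le_mul_of_nonneg_right h2 (by positivity)
    _ = T := div_mul_cancel₀ _ (by positivity)
end

section
/- Let F be a real random variable with F ∈ (0, 1] almost surely, let ξ > 0, and let M = ⌊1/ξ + 1⌋. Then E[F] ≥ 1 − 3ξ − Σ_{i=3}^{M} (i+1)·ξ·P[F ≤ 1/(1 + i·ξ)] − P[F ≤ 1/(1 + (M+1)·ξ)]. -/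
open MeasureTheory

/-- Pointwise key inequality. -/
lemma key_aux (ξ : ℝ) (hξ : 0 < ξ) (M : ℕ) (x : ℝ) (hx0 : 0 < x) (hx1 : x ≤ 1) :
    1 - 3 * ξ
      - (∑ i ∈ Finset.Icc 3 M,
          ((i : ℝ) + 1) * ξ * (if x ≤ 1 / (1 + (i : ℝ) * ξ) then (1:ℝ) else 0))
      - (if x ≤ 1 / (1 + ((M : ℝ) + 1) * ξ) then (1:ℝ) else 0) ≤ x := by
  set c : ℝ := (1 / x - 1) / ξ with hc
  have hx1' : 1 ≤ 1 / x := (le_div_iff₀ hx0).mpr (by linarith)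
  have hc0 : 0 ≤ c := div_nonneg (by linarith) hξ.le
  have hu : x * (1 / x) = 1 := mul_one_div_cancel (ne_of_gt hx0)
  have hiff : ∀ n : ℕ, (x ≤ 1 / (1 + (n : ℝ) * ξ) ↔ n ≤ ⌊c⌋₊) := by
    intro n
    have hpos : (0:ℝ) < 1 + (n : ℝ) * ξ := by positivity
    rw [Nat.le_floor_iff hc0, hc, le_div_iff₀ hξ, le_div_iff₀ hpos]
    constructor
    · intro h; nlinarith
    · intro h; nlinarith
  set j : ℕ := ⌊c⌋₊ with hj
  have hsum_nonneg : ∀ i ∈ Finset.Icc 3 M,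
      0 ≤ ((i : ℝ) + 1) * ξ * (if x ≤ 1 / (1 + (i : ℝ) * ξ) then (1:ℝ) else 0) := by
    intro i _
    have : (0:ℝ) ≤ (if x ≤ 1 / (1 + (i : ℝ) * ξ) then (1:ℝ) else 0) := by positivity
    positivity
  have hlast_nonneg : (0:ℝ) ≤ (if x ≤ 1 / (1 + ((M : ℝ) + 1) * ξ) then (1:ℝ) else 0) := by
    positivity
  have hlast_iff : (x ≤ 1 / (1 + ((M : ℝ) + 1) * ξ)) ↔ (M + 1 ≤ j) := by
    have := hiff (M + 1); push_cast at this; rw [← this]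
  have hS0 : (0:ℝ) ≤ ∑ i ∈ Finset.Icc 3 M,
      ((i : ℝ) + 1) * ξ * (if x ≤ 1 / (1 + (i : ℝ) * ξ) then (1:ℝ) else 0) :=
    Finset.sum_nonneg hsum_nonneg
  by_cases h3 : 3 ≤ j
  · by_cases hMj : M + 1 ≤ j
    · -- last indicator is 1
      rw [if_pos (hlast_iff.mpr hMj)]
      nlinarith
    · -- j ≤ M, pick term i = j in the sum
      have hjM : j ≤ M := by omega
      have hjmem : j ∈ Finset.Icc 3 M := Finset.mem_Icc.mpr ⟨h3, hjM⟩
      have hterm : ((j : ℝ) + 1) * ξ * (if x ≤ 1 / (1 + (j : ℝ) * ξ) then (1:ℝ) else 0)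
          = ((j : ℝ) + 1) * ξ := by rw [if_pos ((hiff j).mpr le_rfl), mul_one]
      have hSle : ((j : ℝ) + 1) * ξ ≤ ∑ i ∈ Finset.Icc 3 M,
          ((i : ℝ) + 1) * ξ * (if x ≤ 1 / (1 + (i : ℝ) * ξ) then (1:ℝ) else 0) := by
        rw [← hterm]
        exact Finset.single_le_sum hsum_nonneg hjmem
      -- j + 1 > c, so x > 1/(1+(j+1)ξ)
      have hnot : ¬ (x ≤ 1 / (1 + ((j + 1 : ℕ) : ℝ) * ξ)) := by
        rw [hiff (j + 1)]; omega
      push_neg at hnot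
      have hpos : (0:ℝ) < 1 + ((j + 1 : ℕ) : ℝ) * ξ := by positivity
      rw [div_lt_iff₀ hpos] at hnot
      push_cast at hnot
      nlinarith
  · -- all sum indicators vanish
    have hSz : (∑ i ∈ Finset.Icc 3 M,
        ((i : ℝ) + 1) * ξ * (if x ≤ 1 / (1 + (i : ℝ) * ξ) then (1:ℝ) else 0)) = 0 := by
      apply Finset.sum_eq_zero
      intro i hi
      have hi3 : 3 ≤ i := (Finset.mem_Icc.mp hi).1
      have : ¬ (x ≤ 1 / (1 + (i : ℝ) * ξ)) := by rw [hiff i]; omega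
      rw [if_neg this, mul_zero]
    rw [hSz]
    by_cases hMj : M + 1 ≤ j
    · rw [if_pos (hlast_iff.mpr hMj)]; nlinarith
    · rw [if_neg (fun h => hMj (hlast_iff.mp h))]
      -- x > 1/(1+3ξ) since ¬(3 ≤ j)
      have hnot : ¬ (x ≤ 1 / (1 + ((3 : ℕ) : ℝ) * ξ)) := by rw [hiff 3]; omega
      push_neg at hnot
      have hpos : (0:ℝ) < 1 + ((3 : ℕ) : ℝ) * ξ := by positivity
      rw [div_lt_iff₀ hpos] at hnot
      push_cast at hnot
      nlinarith

/-- for a random variable `F ∈ (0,1]` a.s., `ξ > 0` and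
`M = ⌊1/ξ + 1⌋`, one has
`E[F] ≥ 1 − 3ξ − Σ_{i=3}^{M} (i+1)·ξ·P[F ≤ 1/(1+iξ)] − P[F ≤ 1/(1+(M+1)ξ)]`. -/
theorem stmt_7 {Ω : Type*} [MeasurableSpace Ω] (μ : Measure Ω)
    [IsProbabilityMeasure μ] (F : Ω → ℝ) (hF : Measurable F)
    (hrange : ∀ᵐ ω ∂μ, F ω ∈ Set.Ioc (0 : ℝ) 1)
    (ξ : ℝ) (hξ : 0 < ξ) :
    ∫ ω, F ω ∂μ ≥ 1 - 3 * ξ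
      - ∑ i ∈ Finset.Icc 3 ⌊1 / ξ + 1⌋₊,
          ((i : ℝ) + 1) * ξ * (μ {ω | F ω ≤ 1 / (1 + (i : ℝ) * ξ)}).toReal
      - (μ {ω | F ω ≤ 1 / (1 + ((⌊1 / ξ + 1⌋₊ : ℝ) + 1) * ξ)}).toReal := by
  set M := ⌊1 / ξ + 1⌋₊ with hM
  have hAmeas : ∀ i : ℕ, MeasurableSet {ω | F ω ≤ 1 / (1 + (i : ℝ) * ξ)} :=
    fun i => measurableSet_le hF measurable_const
  have hBmeas : MeasurableSet {ω | F ω ≤ 1 / (1 + ((M : ℝ) + 1) * ξ)} :=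
    measurableSet_le hF measurable_const
  have hFint : Integrable F μ := by
    refine (integrable_const (1:ℝ)).mono' hF.aestronglyMeasurable ?_
    filter_upwards [hrange] with ω h
    rw [Real.norm_eq_abs, abs_of_pos h.1]; exact h.2
  have hind : ∀ {s : Set Ω}, MeasurableSet s → Integrable (s.indicator (1 : Ω → ℝ)) μ :=
    fun hs => (integrable_const (1:ℝ)).indicator hs
  have hSint : Integrable (fun ω => ∑ i ∈ Finset.Icc 3 M,
      ((i : ℝ) + 1) * ξ * ({ω | F ω ≤ 1 / (1 + (i : ℝ) * ξ)}.indicator 1 ω)) μ := by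
    apply integrable_finset_sum
    intro i _
    exact (hind (hAmeas i)).const_mul _
  have hBint : Integrable
      (fun ω => {ω | F ω ≤ 1 / (1 + ((M : ℝ) + 1) * ξ)}.indicator (1 : Ω → ℝ) ω) μ :=
    hind hBmeas
  have hgint : Integrable (fun ω => 1 - 3 * ξ
      - (∑ i ∈ Finset.Icc 3 M,
          ((i : ℝ) + 1) * ξ * ({ω | F ω ≤ 1 / (1 + (i : ℝ) * ξ)}.indicator 1 ω))
      - {ω | F ω ≤ 1 / (1 + ((M : ℝ) + 1) * ξ)}.indicator 1 ω) μ :=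
    (((integrable_const _).sub hSint).sub hBint)
  have hmono : ∫ ω, (1 - 3 * ξ
      - (∑ i ∈ Finset.Icc 3 M,
          ((i : ℝ) + 1) * ξ * ({ω | F ω ≤ 1 / (1 + (i : ℝ) * ξ)}.indicator 1 ω))
      - {ω | F ω ≤ 1 / (1 + ((M : ℝ) + 1) * ξ)}.indicator 1 ω) ∂μ ≤ ∫ ω, F ω ∂μ := by
    refine integral_mono_ae hgint hFint ?_
    filter_upwards [hrange] with ω h
    have := key_aux ξ hξ M (F ω) h.1 h.2
    simpa [Set.indicator_apply, Set.mem_setOf_eq] using this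
  have hcalc : ∫ ω, (1 - 3 * ξ
      - (∑ i ∈ Finset.Icc 3 M,
          ((i : ℝ) + 1) * ξ * ({ω | F ω ≤ 1 / (1 + (i : ℝ) * ξ)}.indicator 1 ω))
      - {ω | F ω ≤ 1 / (1 + ((M : ℝ) + 1) * ξ)}.indicator 1 ω) ∂μ
      = 1 - 3 * ξ
      - ∑ i ∈ Finset.Icc 3 M,
          ((i : ℝ) + 1) * ξ * (μ {ω | F ω ≤ 1 / (1 + (i : ℝ) * ξ)}).toReal
      - (μ {ω | F ω ≤ 1 / (1 + ((M : ℝ) + 1) * ξ)}).toReal := by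
    have hC : Integrable (fun _ : Ω => 1 - 3 * ξ) μ := integrable_const _
    have h1 : Integrable (fun ω => 1 - 3 * ξ
        - (∑ i ∈ Finset.Icc 3 M,
            ((i : ℝ) + 1) * ξ * ({ω | F ω ≤ 1 / (1 + (i : ℝ) * ξ)}.indicator 1 ω))) μ :=
      hC.sub hSint
    rw [integral_sub h1 hBint,
        integral_sub hC hSint, integral_const,
        integral_finset_sum _ (fun i _ => (hind (hAmeas i)).const_mul _),
        integral_indicator_one hBmeas]
    simp only [Measure.real, measure_univ, ENNReal.toReal_one, one_smul]
    congr 2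
    refine Finset.sum_congr rfl fun i _ => ?_
    rw [integral_const_mul, integral_indicator_one (hAmeas i), Measure.real]
  rw [ge_iff_le, ← hcalc]
  exact hmono
end

section
/- Let d ≥ 1 and b > 1 be real numbers and let r ∈ (0, 1) satisfy 9·√((1 + ln d)/b) ≤ r and 9·√((1 + ln d)/b) ≤ 1 − r. Define δ = (1 − r) − r/(b − 1). Then 0 < δ < 1 and (δ²/3)·(1 − δ)·(b − 1) ≥ ln d + (1 − r)·√b. -/
set_option maxHeartbeats 1000000


/-- for `d ≥ 1`, `b > 1`, and `r ∈ (0,1)` with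
`9√((1+ln d)/b) ≤ r` and `9√((1+ln d)/b) ≤ 1 − r`, setting
`δ = (1 − r) − r/(b − 1)` one has `0 < δ < 1` and
`(δ²/3)·(1 − δ)·(b − 1) ≥ ln d + (1 − r)·√b`. -/
theorem stmt_11 (d b r : ℝ) (hd : 1 ≤ d) (hb : 1 < b)
    (hr0 : 0 < r) (hr1 : r < 1)
    (hlow : 9 * Real.sqrt ((1 + Real.log d) / b) ≤ r)
    (hhigh : 9 * Real.sqrt ((1 + Real.log d) / b) ≤ 1 - r) :
    0 < (1 - r) - r / (b - 1) ∧ (1 - r) - r / (b - 1) < 1 ∧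
    (((1 - r) - r / (b - 1)) ^ 2 / 3) * (1 - ((1 - r) - r / (b - 1))) * (b - 1)
      ≥ Real.log d + (1 - r) * Real.sqrt b := by
  have hbpos : (0:ℝ) < b := by linarith
  have hb1 : (0:ℝ) < b - 1 := by linarith
  have hL : 0 ≤ Real.log d := Real.log_nonneg hd
  set L := Real.log d with hLdef
  set s := Real.sqrt ((1 + L) / b) with hsdef
  set sb := Real.sqrt b with hsbdef
  have hsbpos : 0 < sb := Real.sqrt_pos.mpr hbpos
  have hsb2 : sb ^ 2 = b := Real.sq_sqrt hbpos.le
  have hs0 : 0 ≤ s := Real.sqrt_nonneg _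
  have hs2 : s ^ 2 = (1 + L) / b := Real.sq_sqrt (by positivity)
  have hs2' : b * s ^ 2 = 1 + L := by
    rw [hs2]; field_simp
  have hsbs : 1 ≤ sb * s := by
    nlinarith [sq_nonneg (sb * s - 1), mul_nonneg hsbpos.le hs0, hs2', hsb2]
  have hspos : 0 < s := by nlinarith
  have hsb9 : 9 < sb := by nlinarith
  have hrsb : 9 ≤ r * sb := by nlinarith
  have h1rsb : 9 ≤ (1 - r) * sb := by nlinarith
  -- log bounds
  have h81r : 81 * s ^ 2 ≤ r ^ 2 := by
    nlinarith [mul_nonneg (sub_nonneg.mpr hlow) (by positivity : (0:ℝ) ≤ r + 9 * s)]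
  have h81r' : 81 * s ^ 2 ≤ (1 - r) ^ 2 := by
    nlinarith [mul_nonneg (sub_nonneg.mpr hhigh) (by linarith : (0:ℝ) ≤ (1 - r) + 9 * s)]
  have hln_r : 81 * (1 + L) ≤ b * r ^ 2 := by
    nlinarith [mul_le_mul_of_nonneg_left h81r hbpos.le, hs2']
  have hln_1r : 81 * (1 + L) ≤ b * (1 - r) ^ 2 := by
    nlinarith [mul_le_mul_of_nonneg_left h81r' hbpos.le, hs2']
  -- key: 80 r ≤ (1-r)(b-1)
  have hkey : 80 * r ≤ (1 - r) * (b - 1) := by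
    nlinarith [mul_le_mul_of_nonneg_right h1rsb hsbpos.le]
  set D : ℝ := (1 - r) - r / (b - 1) with hDdef
  have hDlow : (79/80) * (1 - r) ≤ D := by
    have : r / (b - 1) ≤ (1 - r) / 80 := by
      rw [div_le_div_iff₀ hb1 (by norm_num)]
      linarith
    rw [hDdef]; linarith
  have hDpos : 0 < D := lt_of_lt_of_le (by nlinarith) hDlow
  have hDlt1 : D < 1 := by
    have : 0 < r / (b - 1) := div_pos hr0 hb1
    rw [hDdef]; linarith
  refine ⟨hDpos, hDlt1, ?_⟩
  have h1D : (1 - D) * (b - 1) = r * b := by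
    rw [hDdef]; field_simp; ring
  have hg1 : L ≤ (2/81) * ((1 - r) ^ 2 * (r * b)) := by
    rcases le_total r (1/2) with hc | hc
    · have hx : 0 ≤ 2 * (1 - r) ^ 2 - r := by nlinarith
      nlinarith [mul_nonneg (mul_pos hbpos hr0).le hx]
    · have hx : 0 ≤ 2 * r - 1 := by linarith
      nlinarith [mul_nonneg (mul_nonneg hbpos.le (sq_nonneg (1 - r))) hx]
  have hg : 9 ≤ 2 * ((1 - r) * r * sb) := by
    rcases le_total r (1/2) with hc | hc
    · nlinarith
    · nlinarith
  have hg2 : (1 - r) * sb ≤ (2/9) * ((1 - r) ^ 2 * (r * b)) := by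
    nlinarith [mul_le_mul_of_nonneg_left hg
      (mul_nonneg (by linarith : (0:ℝ) ≤ 1 - r) hsbpos.le), hsb2]
  have hD2 : ((79/80) * (1 - r)) ^ 2 ≤ D ^ 2 := by
    have h0 : 0 ≤ (79/80) * (1 - r) := by linarith
    exact pow_le_pow_left₀ h0 hDlow 2
  have hrb3 : (0:ℝ) ≤ r * b / 3 := by positivity
  have hmul := mul_le_mul_of_nonneg_right hD2 hrb3
  have hX : 0 ≤ (1 - r) ^ 2 * (r * b) := by positivity
  have hfin : L + (1 - r) * sb ≤ (20/81) * ((1 - r) ^ 2 * (r * b)) := by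
    linarith [hg1, hg2]
  have hstep : (20/81) * ((1 - r) ^ 2 * (r * b)) ≤ (6241/19200) * ((1 - r) ^ 2 * (r * b)) := by
    nlinarith [hX]
  have hmul' : (6241/19200) * ((1 - r) ^ 2 * (r * b)) ≤ D ^ 2 / 3 * (r * b) := by
    calc (6241/19200) * ((1 - r) ^ 2 * (r * b)) = ((79/80) * (1 - r)) ^ 2 * (r * b / 3) := by
          ring
      _ ≤ D ^ 2 * (r * b / 3) := hmul
      _ = D ^ 2 / 3 * (r * b) := by ring
  calc L + (1 - r) * sb ≤ D ^ 2 / 3 * (r * b) := by linarith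
    _ = D ^ 2 / 3 * ((1 - D) * (b - 1)) := by rw [h1D]
    _ = D ^ 2 / 3 * (1 - D) * (b - 1) := by ring
end

section
/- Let d ≥ 1 and b ≥ 2 be real numbers. Define ψ = d^{1/(b−1)} and δ = 4·e·ψ·(1 − 1/b) − 1. Then δ > 0 and ( e^δ / (1 + δ)^{1+δ} )^{b/(4·e·ψ)} ≤ 1/(2d). -/
/-- for reals `d ≥ 1`, `b ≥ 2`, with `ψ = d^{1/(b−1)}` and
`δ = 4eψ(1 − 1/b) − 1`, one has `δ > 0` and
`(e^δ/(1+δ)^{1+δ})^{b/(4eψ)} ≤ 1/(2d)`. -/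
theorem stmt_12 (d b : ℝ) (hd : 1 ≤ d) (hb : 2 ≤ b)
    (ψ δ : ℝ) (hψ : ψ = d ^ (1 / (b - 1)))
    (hδ : δ = 4 * Real.exp 1 * ψ * (1 - 1 / b) - 1) :
    0 < δ ∧
    (Real.exp δ / (1 + δ) ^ (1 + δ)) ^ (b / (4 * Real.exp 1 * ψ)) ≤ 1 / (2 * d) := by
  have hd0 : (0:ℝ) < d := by linarith
  have hb0 : (0:ℝ) < b := by linarith
  have hb1 : (1:ℝ) ≤ b - 1 := by linarith
  have hb1' : b - 1 ≠ 0 := by linarith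
  have hψ1 : (1:ℝ) ≤ ψ := by
    rw [hψ]; exact Real.one_le_rpow hd (by positivity)
  have he : (2:ℝ) < Real.exp 1 := by
    have := Real.exp_one_gt_d9; linarith
  have hfrac : (1:ℝ)/2 ≤ 1 - 1/b := by
    have h1 : 1/b ≤ 1/2 := by
      rw [div_le_div_iff₀ hb0 two_pos]; linarith
    linarith
  have hc0 : (0:ℝ) < 4 * Real.exp 1 * ψ := by positivity
  have hδpos : 0 < δ := by
    rw [hδ]
    nlinarith [mul_le_mul (mul_le_mul (by linarith : (8:ℝ) ≤ 4*Real.exp 1) hψ1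
      zero_le_one (by linarith)) hfrac (by linarith) (by positivity : (0:ℝ) ≤ 4*Real.exp 1*ψ)]
  refine ⟨hδpos, ?_⟩
  have hx0 : (0:ℝ) < 1 + δ := by linarith
  have hx_eq : (1:ℝ) + δ = 4 * Real.exp 1 * ψ * (1 - 1/b) := by rw [hδ]; ring
  have hlogψ : Real.log ψ = (1/(b-1)) * Real.log d := by
    rw [hψ, Real.log_rpow hd0]
  have hlogx : Real.log (1+δ) = Real.log 4 + 1 + (1/(b-1)) * Real.log d + Real.log (1-1/b) := by
    rw [hx_eq, Real.log_mul (by positivity) (by linarith),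
      Real.log_mul (by positivity) (by linarith), Real.log_mul (by norm_num) (Real.exp_ne_zero 1),
      Real.log_exp, hlogψ]
  have hlhs : (0:ℝ) < Real.exp δ / (1 + δ) ^ (1 + δ) := by positivity
  rw [← Real.log_le_log_iff (by positivity) (by positivity),
    Real.log_rpow hlhs, Real.log_div (Real.exp_ne_zero δ) (by positivity),
    Real.log_exp, Real.log_rpow hx0, Real.log_div one_ne_zero (by positivity), Real.log_one,
    Real.log_mul two_ne_zero (ne_of_gt hd0)]
  -- goal: b / (4*e*ψ) * (δ - (1+δ) * log (1+δ)) ≤ 0 - (log 2 + log d)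
  have key1 : b / (4 * Real.exp 1 * ψ) * δ = (b - 1) - b / (4 * Real.exp 1 * ψ) := by
    rw [hδ]; field_simp
  have key2 : b / (4 * Real.exp 1 * ψ) * ((1+δ) * Real.log (1+δ))
      = (b-1) * (Real.log 4 + 1 + Real.log (1-1/b)) + Real.log d := by
    rw [hlogx, hx_eq]; field_simp; ring
  have hS : Real.log 2 ≤ Real.log 4 + Real.log (1-1/b) := by
    rw [← Real.log_mul (by norm_num) (by linarith)]
    apply Real.log_le_log two_pos
    nlinarith
  have ht : 0 < b / (4 * Real.exp 1 * ψ) := by positivity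
  have hS2 : (0:ℝ) ≤ (b - 2) * (Real.log 4 + Real.log (1-1/b)) := by
    have : (0:ℝ) < Real.log 2 := Real.log_pos (by norm_num)
    nlinarith
  rw [mul_sub, key1, key2]
  linarith
end

section
/- Let d ≥ 1, B ≥ 2, and b ≥ B be real numbers, and define p = 1 − (1/(2e))·(1/(2d))^{1/(B−1)}. Then ( e·(1 − p) / (1 − 1/b) )^{b−1} ≤ 1/(2d). -/
/-- for reals `d ≥ 1`, `B ≥ 2`, `b ≥ B`, with
`p = 1 − (1/(2e))·(1/(2d))^{1/(B−1)}`, one has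
`(e·(1 − p)/(1 − 1/b))^{b−1} ≤ 1/(2d)`. -/
theorem stmt_16 (d B b : ℝ) (hd : 1 ≤ d) (hB : 2 ≤ B) (hb : B ≤ b)
    (p : ℝ) (hp : p = 1 - (1 / (2 * Real.exp 1)) * (1 / (2 * d)) ^ (1 / (B - 1))) :
    (Real.exp 1 * (1 - p) / (1 - 1 / b)) ^ (b - 1) ≤ 1 / (2 * d) := by
  have hb2 : (2:ℝ) ≤ b := le_trans hB hb
  have hbpos : (0:ℝ) < b := by linarith
  have hB1 : (0:ℝ) < B - 1 := by linarith
  have hb1 : (0:ℝ) < b - 1 := by linarith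
  have hxpos : (0:ℝ) < 1 / (2 * d) := by positivity
  have hx1 : (1:ℝ) / (2 * d) ≤ 1 := by
    rw [div_le_one (by linarith)]; linarith
  set X : ℝ := (1 / (2 * d)) ^ (1 / (B - 1)) with hX
  have hXpos : 0 < X := Real.rpow_pos_of_pos hxpos _
  have hX1 : X ≤ 1 := Real.rpow_le_one hxpos.le hx1 (by positivity)
  have hepos : (0:ℝ) < Real.exp 1 := Real.exp_pos 1
  have h1p : Real.exp 1 * (1 - p) = X / 2 := by
    rw [hp]; field_simp; ring
  have hden : 1 - 1 / b = (b - 1) / b := by field_simp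
  have hdenpos : (0:ℝ) < 1 - 1 / b := by rw [hden]; positivity
  have hbase : Real.exp 1 * (1 - p) / (1 - 1 / b) ≤ X := by
    rw [h1p, hden, div_div_eq_mul_div, div_le_iff₀ (by positivity)]
    rw [div_mul_eq_mul_div]
    nlinarith [hXpos.le]
  have hbasepos : 0 < Real.exp 1 * (1 - p) / (1 - 1 / b) := by
    rw [h1p, hden]; positivity
  calc (Real.exp 1 * (1 - p) / (1 - 1 / b)) ^ (b - 1)
      ≤ X ^ (b - 1) := Real.rpow_le_rpow hbasepos.le hbase hb1.le
    _ = (1 / (2 * d)) ^ ((1 / (B - 1)) * (b - 1)) := by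
        rw [hX, ← Real.rpow_mul hxpos.le]
    _ ≤ (1 / (2 * d)) ^ (1:ℝ) := by
        apply Real.rpow_le_rpow_of_exponent_ge hxpos hx1
        rw [div_mul_eq_mul_div, one_mul, le_div_iff₀ hB1]; linarith
    _ = 1 / (2 * d) := Real.rpow_one _
end
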